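/- Let Q = {x ∈ V : ℓ₁(x) ≥ 0, …, ℓ_r(x) ≥ 0} and Q' = {x ∈ V' : ℓ'₁(x) ≥ 0, …, ℓ'_s(x) ≥ 0} be quadrants in finite-dimensional real vector spaces, defined by linearly independent families of linear forms. If f : Q → Q' is a diffeomorphism, then for every x ∈ Q the index of x in Q equals the index of f(x) in Q', i.e. #{i : ℓ_i(x) = 0} = #{j : ℓ'_j(f(x)) = 0}. In particular r = s. -/

import Mathlib

open Set

/-- A map `f` is weakly smooth on a subset `A` if it admits a smooth extension
to an open neighborhood of `A` (such a map is in particular continuous on `A`). -/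
def WeaklySmooth {E F : Type*} [NormedAddCommGroup E] [NormedSpace ℝ E]
    [NormedAddCommGroup F] [NormedSpace ℝ F] (A : Set E) (f : E → F) : Prop :=
  ∃ U : Set E, IsOpen U ∧ A ⊆ U ∧
    ∃ g : E → F, ContDiffOn ℝ (⊤ : ℕ∞) g U ∧ EqOn f g A

section AuxLemmas

open Filter Topology

open Classical in
lemma pi_surj {V : Type*} [AddCommGroup V] [Module ℝ V]
    {ι : Type*} [Fintype ι] (η : ι → V →ₗ[ℝ] ℝ) (hη : LinearIndependent ℝ η) :
    Function.Surjective (LinearMap.pi η) := by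
  rw [← LinearMap.range_eq_top]
  by_contra hn
  obtain ⟨φ, φne, hφ⟩ := Submodule.exists_dual_map_eq_bot_of_lt_top
    (lt_top_iff_ne_top.mpr hn) inferInstance
  set c : ι → ℝ := fun i => φ (fun j => if i = j then 1 else 0) with hc
  have hzero : ∀ x : V, φ (LinearMap.pi η x) = 0 := by
    intro x
    have : φ (LinearMap.pi η x) ∈ Submodule.map φ (LinearMap.range (LinearMap.pi η)) :=
      Submodule.mem_map_of_mem (LinearMap.mem_range_self _ x)
    rw [hφ] at this
    simpa using this
  have hcomb : ∀ x : V, ∑ i, η i x • c i = 0 := by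
    intro x
    have := hzero x
    rwa [LinearMap.pi_apply_eq_sum_univ φ] at this
  have hc0 : ∀ i, c i = 0 := by
    apply Fintype.linearIndependent_iff.mp hη
    ext x
    simp only [LinearMap.coe_sum, Finset.sum_apply, LinearMap.smul_apply,
      LinearMap.zero_apply]
    have := hcomb x
    simpa [smul_eq_mul, mul_comm] using this
  apply φne
  refine LinearMap.ext fun y => ?_
  rw [LinearMap.pi_apply_eq_sum_univ φ]
  simp [show ∀ i:ι, (φ fun j => if i = j then 1 else 0) = 0 from hc0]

lemma card_add_finrank_ker {V : Type*} [AddCommGroup V] [Module ℝ V] [FiniteDimensional ℝ V]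
    {ι : Type*} [Fintype ι] (η : ι → V →ₗ[ℝ] ℝ)
    (hs : Function.Surjective (LinearMap.pi η)) :
    Fintype.card ι + Module.finrank ℝ (LinearMap.ker (LinearMap.pi η)) = Module.finrank ℝ V := by
  have h := LinearMap.finrank_range_add_finrank_ker (LinearMap.pi η)
  rw [LinearMap.range_eq_top.mpr hs, finrank_top, Module.finrank_fintype_fun_eq_card] at h
  exact h

lemma deriv_nonneg_core
    {V V' : Type*} [NormedAddCommGroup V] [NormedSpace ℝ V] [FiniteDimensional ℝ V]
    [NormedAddCommGroup V'] [NormedSpace ℝ V'] [FiniteDimensional ℝ V']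
    {r : ℕ} (ℓ : Fin r → V →ₗ[ℝ] ℝ) {s : ℕ} (ℓ' : Fin s → V' →ₗ[ℝ] ℝ)
    {Q : Set V} (hQ : Q = {x | ∀ i, 0 ≤ ℓ i x})
    {F : V → V'} {x : V} (hx : x ∈ Q) (hF : DifferentiableAt ℝ F x)
    (hmap : ∀ y ∈ Q, ∀ j, 0 ≤ ℓ' j (F y))
    {v : V} (hv : ∀ i, ℓ i x = 0 → ℓ i v = 0)
    {j : Fin s} (hj : ℓ' j (F x) = 0) :
    0 ≤ ℓ' j (fderiv ℝ F x v) := by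
  set d : ℝ := ℓ' j (fderiv ℝ F x v) with hd
  set h : ℝ → ℝ := fun t => ℓ' j (F (x + t • v)) with hh
  -- the curve
  have hcurve : HasDerivAt (fun t : ℝ => x + t • v) v 0 := by
    simpa using ((hasDerivAt_id (0 : ℝ)).smul_const v).const_add x
  have hx0 : x + (0 : ℝ) • v = x := by simp
  have hF' : HasFDerivAt F (fderiv ℝ F x) (x + (0 : ℝ) • v) := by
    rw [hx0]; exact hF.hasFDerivAt
  have h1 : HasDerivAt (fun t : ℝ => F (x + t • v)) (fderiv ℝ F x v) 0 :=
    hF'.comp_hasDerivAt 0 hcurve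
  have L : V' →L[ℝ] ℝ := LinearMap.toContinuousLinearMap (ℓ' j)
  have h2 : HasDerivAt h d 0 := by
    have := ((LinearMap.toContinuousLinearMap (ℓ' j)).hasFDerivAt
      (x := F (x + (0:ℝ) • v))).comp_hasDerivAt 0 h1
    simpa [hh, hd, Function.comp_def] using this
  have hW := h2.hasDerivWithinAt (s := Ici 0)
  rw [hasDerivWithinAt_iff_tendsto_slope] at hW
  have hIci : Ici (0:ℝ) \ {0} = Ioi 0 := Ici_sdiff_left
  rw [hIci] at hW
  -- eventually in Q
  have hev1 : ∀ᶠ t in 𝓝 (0:ℝ), ∀ i, 0 < ℓ i x → 0 ≤ ℓ i (x + t • v) := by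
    rw [eventually_all]
    intro i
    by_cases hi : 0 < ℓ i x
    · have hc : ContinuousAt (fun t : ℝ => ℓ i (x + t • v)) 0 := by
        exact ((LinearMap.continuous_of_finiteDimensional (ℓ i)).comp
          (by continuity)).continuousAt
      have h0 : (fun t : ℝ => ℓ i (x + t • v)) 0 = ℓ i x := by simp
      have hmem : (fun t : ℝ => ℓ i (x + t • v)) ⁻¹' Ioi 0 ∈ 𝓝 (0:ℝ) :=
        hc.preimage_mem_nhds (Ioi_mem_nhds (by simpa using hi))
      filter_upwards [hmem] with t ht _
      exact le_of_lt ht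
    · exact Eventually.of_forall fun t hcon => absurd hcon hi
  have hev : ∀ᶠ t in 𝓝[Ioi (0:ℝ)] 0, x + t • v ∈ Q := by
    filter_upwards [self_mem_nhdsWithin, nhdsWithin_le_nhds hev1] with t ht h1t
    rw [hQ]
    intro i
    by_cases he : ℓ i x = 0
    · have : ℓ i (x + t • v) = 0 := by
        simp [map_add, map_smul, he, hv i he]
      rw [this]
    · have hlt : 0 < ℓ i x :=
        lt_of_le_of_ne (by rw [hQ] at hx; exact hx i) (Ne.symm he)
      exact h1t i hlt
  have hslope : ∀ᶠ t in 𝓝[Ioi (0:ℝ)] 0, 0 ≤ slope h 0 t := by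
    filter_upwards [self_mem_nhdsWithin, hev] with t ht htQ
    have hh0 : h 0 = 0 := by simpa [hh, hx0] using hj
    have hht : 0 ≤ h t := hmap _ htQ j
    have hst : slope h 0 t = h t / t := by
      rw [slope_def_field, hh0, sub_zero, sub_zero]
    rw [hst]
    exact div_nonneg hht (le_of_lt ht)
  exact ge_of_tendsto hW hslope

lemma quadrant_uniqueDiffOn {V : Type*} [NormedAddCommGroup V] [NormedSpace ℝ V]
    [FiniteDimensional ℝ V] {r : ℕ} (ℓ : Fin r → V →ₗ[ℝ] ℝ)
    (hℓ : LinearIndependent ℝ ℓ) :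
    UniqueDiffOn ℝ {x : V | ∀ i, 0 ≤ ℓ i x} := by
  apply uniqueDiffOn_convex
  · intro x hx y hy a b ha hb hab i
    simp only [map_add, map_smul, smul_eq_mul]
    exact add_nonneg (mul_nonneg ha (hx i)) (mul_nonneg hb (hy i))
  · obtain ⟨v₀, hv₀⟩ := pi_surj ℓ hℓ (fun _ => 1)
    have hW : IsOpen {x : V | ∀ i, 0 < ℓ i x} := by
      have : {x : V | ∀ i, 0 < ℓ i x} = ⋂ i, (ℓ i) ⁻¹' Ioi 0 := by ext; simp
      rw [this]
      exact isOpen_iInter_of_finite fun i =>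
        isOpen_Ioi.preimage (LinearMap.continuous_of_finiteDimensional _)
    have hWQ : {x : V | ∀ i, 0 < ℓ i x} ⊆ {x : V | ∀ i, 0 ≤ ℓ i x} :=
      fun x hx i => (hx i).le
    have hv : v₀ ∈ {x : V | ∀ i, 0 < ℓ i x} := by
      intro i
      have : ℓ i v₀ = 1 := congrFun hv₀ i
      rw [this]; norm_num
    exact ⟨v₀, (hW.subset_interior_iff.mpr hWQ) hv⟩


lemma quadrant_index_aux
    {V V' : Type*} [NormedAddCommGroup V] [NormedSpace ℝ V] [FiniteDimensional ℝ V]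
    [NormedAddCommGroup V'] [NormedSpace ℝ V'] [FiniteDimensional ℝ V']
    {r s : ℕ} (ℓ : Fin r → V →ₗ[ℝ] ℝ) (ℓ' : Fin s → V' →ₗ[ℝ] ℝ)
    (hℓ : LinearIndependent ℝ ℓ) (hℓ' : LinearIndependent ℝ ℓ')
    (Q : Set V) (Q' : Set V')
    (hQ : Q = {x | ∀ i, 0 ≤ ℓ i x}) (hQ' : Q' = {y | ∀ j, 0 ≤ ℓ' j y})
    (f : V → V') (g : V' → V)
    (hf : WeaklySmooth Q f) (hg : WeaklySmooth Q' g)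
    (hfQ : Set.MapsTo f Q Q') (hgQ : Set.MapsTo g Q' Q)
    (hgf : ∀ x ∈ Q, g (f x) = x) (hfg : ∀ y ∈ Q', f (g y) = y) :
    ∀ x ∈ Q, {i | ℓ i x = 0}.ncard = {j | ℓ' j (f x) = 0}.ncard := by
  classical
  obtain ⟨U, hUo, hQU, F, hFsm, hfF⟩ := hf
  obtain ⟨U', hU'o, hQ'U', G, hGsm, hgG⟩ := hg
  have hQud : UniqueDiffOn ℝ Q := by rw [hQ]; exact quadrant_uniqueDiffOn ℓ hℓ
  have hQ'ud : UniqueDiffOn ℝ Q' := by rw [hQ']; exact quadrant_uniqueDiffOn ℓ' hℓ'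
  intro x hx
  have hfx : f x ∈ Q' := hfQ hx
  have hFd : DifferentiableAt ℝ F x :=
    (hFsm.contDiffAt (hUo.mem_nhds (hQU hx))).differentiableAt (by simp)
  have hGd : DifferentiableAt ℝ G (f x) :=
    (hGsm.contDiffAt (hU'o.mem_nhds (hQ'U' hfx))).differentiableAt (by simp)
  set T := fderiv ℝ F x with hT
  set S := fderiv ℝ G (f x) with hS
  have hFf : ∀ y ∈ Q, F y = f y := fun y hy => (hfF hy).symm
  have hGg : ∀ y ∈ Q', G y = g y := fun y hy => (hgG hy).symm
  have hGFx : G (f x) = x := by rw [hGg _ hfx, hgf x hx]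
  -- S ∘ T = id
  have hST : S.comp T = ContinuousLinearMap.id ℝ V := by
    have hcomp : HasFDerivWithinAt (G ∘ F) (S.comp T) Q x := by
      have hG' : HasFDerivAt G S (F x) := by rw [hFf x hx]; exact hGd.hasFDerivAt
      exact hG'.comp_hasFDerivWithinAt x hFd.hasFDerivAt.hasFDerivWithinAt
    have hid : HasFDerivWithinAt (id : V → V) (S.comp T) Q x := by
      apply hcomp.congr ?_ ?_
      · intro y hy
        show y = G (F y)
        rw [hFf y hy, hGg _ (hfQ hy), hgf y hy]
      · show x = G (F x)
        rw [hFf x hx, hGFx]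
    exact ((hQud x hx).eq hid (hasFDerivWithinAt_id x Q)).symm ▸ rfl
  -- T ∘ S = id
  have hTS : T.comp S = ContinuousLinearMap.id ℝ V' := by
    have hcomp : HasFDerivWithinAt (F ∘ G) (T.comp S) Q' (f x) := by
      have hF' : HasFDerivAt F T (G (f x)) := by rw [hGFx]; exact hFd.hasFDerivAt
      exact hF'.comp_hasFDerivWithinAt (f x) hGd.hasFDerivAt.hasFDerivWithinAt
    have hid : HasFDerivWithinAt (id : V' → V') (T.comp S) Q' (f x) := by
      apply hcomp.congr ?_ ?_
      · intro y hy
        show y = F (G y)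
        rw [hGg y hy, hFf _ (hgQ hy), hfg y hy]
      · show f x = F (G (f x))
        rw [hGFx, hFf x hx]
    exact ((hQ'ud _ hfx).eq hid (hasFDerivWithinAt_id (f x) Q')).symm ▸ rfl
  have hSTv : ∀ v : V, S (T v) = v := by
    intro v
    have := congrArg (fun A : V →L[ℝ] V => A v) hST
    simpa using this
  have hTSw : ∀ w : V', T (S w) = w := by
    intro w
    have := congrArg (fun A : V' →L[ℝ] V' => A w) hTS
    simpa using this
  let e : V ≃L[ℝ] V' := ContinuousLinearEquiv.equivOfInverse T S hSTv hTSw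
  -- the active sets and their kernels
  set I := {i | ℓ i x = 0} with hI
  set J := {j | ℓ' j (f x) = 0} with hJ
  haveI : Fintype ↥I := Fintype.ofFinite _
  haveI : Fintype ↥J := Fintype.ofFinite _
  set ηI : ↥I → V →ₗ[ℝ] ℝ := fun i => ℓ i with hηI
  set ηJ : ↥J → V' →ₗ[ℝ] ℝ := fun j => ℓ' j with hηJ
  have hηIli : LinearIndependent ℝ ηI := hℓ.comp _ Subtype.val_injective
  have hηJli : LinearIndependent ℝ ηJ := hℓ'.comp _ Subtype.val_injective
  set K := LinearMap.ker (LinearMap.pi ηI) with hK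
  set K' := LinearMap.ker (LinearMap.pi ηJ) with hK'
  have hKmem : ∀ v : V, v ∈ K ↔ ∀ i : Fin r, ℓ i x = 0 → ℓ i v = 0 := by
    intro v
    simp only [hK, LinearMap.mem_ker, funext_iff, LinearMap.pi_apply, Pi.zero_apply]
    constructor
    · intro hz i hi; exact hz ⟨i, hi⟩
    · rintro hz ⟨i, hi⟩; exact hz i hi
  have hK'mem : ∀ w : V', w ∈ K' ↔ ∀ j : Fin s, ℓ' j (f x) = 0 → ℓ' j w = 0 := by
    intro w
    simp only [hK', LinearMap.mem_ker, funext_iff, LinearMap.pi_apply, Pi.zero_apply]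
    constructor
    · intro hz j hj; exact hz ⟨j, hj⟩
    · rintro hz ⟨j, hj⟩; exact hz j hj
  -- F maps Q into Q' (in terms of inequalities), G maps Q' into Q
  have hmapF : ∀ y ∈ Q, ∀ j, 0 ≤ ℓ' j (F y) := by
    intro y hy j'
    rw [hFf y hy]
    have := hfQ hy; rw [hQ'] at this; exact this j'
  have hmapG : ∀ y ∈ Q', ∀ i, 0 ≤ ℓ i (G y) := by
    intro y hy i'
    rw [hGg y hy]
    have := hgQ hy; rw [hQ] at this; exact this i'
  -- T maps K into K', S maps K' into K
  have hTK : ∀ v ∈ K, T v ∈ K' := by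
    intro v hv
    rw [hK'mem]
    intro j' hj'
    have hvz : ∀ i, ℓ i x = 0 → ℓ i v = 0 := (hKmem v).mp hv
    have hvz' : ∀ i, ℓ i x = 0 → ℓ i (-v) = 0 := by
      intro i hi; rw [map_neg, hvz i hi, neg_zero]
    have hjF : ℓ' j' (F x) = 0 := by rw [hFf x hx]; exact hj'
    have h1 : 0 ≤ ℓ' j' (T v) :=
      deriv_nonneg_core ℓ ℓ' hQ hx hFd hmapF hvz hjF
    have h2 : 0 ≤ ℓ' j' (T (-v)) :=
      deriv_nonneg_core ℓ ℓ' hQ hx hFd hmapF hvz' hjF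
    rw [map_neg, map_neg] at h2
    linarith
  have hSK : ∀ w ∈ K', S w ∈ K := by
    intro w hw
    rw [hKmem]
    intro i' hi'
    have hwz : ∀ j, ℓ' j (f x) = 0 → ℓ' j w = 0 := (hK'mem w).mp hw
    have hwz' : ∀ j, ℓ' j (f x) = 0 → ℓ' j (-w) = 0 := by
      intro j hj; rw [map_neg, hwz j hj, neg_zero]
    have hiG : ℓ i' (G (f x)) = 0 := by rw [hGFx]; exact hi'
    have h1 : 0 ≤ ℓ i' (S w) :=
      deriv_nonneg_core ℓ' ℓ hQ' hfx hGd hmapG hwz hiG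
    have h2 : 0 ≤ ℓ i' (S (-w)) :=
      deriv_nonneg_core ℓ' ℓ hQ' hfx hGd hmapG hwz' hiG
    rw [map_neg, map_neg] at h2
    linarith
  -- K maps onto K' under e
  have hmapeq : K.map (e.toLinearEquiv : V →ₗ[ℝ] V') = K' := by
    apply le_antisymm
    · rintro w ⟨v, hv, rfl⟩
      exact hTK v hv
    · intro w hw
      exact ⟨S w, hSK w hw, hTSw w⟩
  have hfr : Module.finrank ℝ K = Module.finrank ℝ K' := by
    rw [← hmapeq]
    exact (LinearEquiv.finrank_map_eq e.toLinearEquiv K).symm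
  have hdim : Module.finrank ℝ V = Module.finrank ℝ V' := e.toLinearEquiv.finrank_eq
  have hIcard : Fintype.card ↥I + Module.finrank ℝ K = Module.finrank ℝ V :=
    card_add_finrank_ker ηI (pi_surj ηI hηIli)
  have hJcard : Fintype.card ↥J + Module.finrank ℝ K' = Module.finrank ℝ V' :=
    card_add_finrank_ker ηJ (pi_surj ηJ hηJli)
  have hIn : I.ncard = Fintype.card ↥I := by
    rw [← Nat.card_coe_set_eq, Nat.card_eq_fintype_card]
  have hJn : J.ncard = Fintype.card ↥J := by
    rw [← Nat.card_coe_set_eq, Nat.card_eq_fintype_card]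
  show I.ncard = J.ncard
  omega

end AuxLemmas

/-- A diffeomorphism between quadrants preserves the index of points:
`#{i : ℓ i x = 0} = #{j : ℓ' j (f x) = 0}`; in particular the number of defining
linear forms is the same on both sides. -/
theorem quadrant_diffeo_preserves_index
    {V V' : Type*} [NormedAddCommGroup V] [NormedSpace ℝ V] [FiniteDimensional ℝ V]
    [NormedAddCommGroup V'] [NormedSpace ℝ V'] [FiniteDimensional ℝ V']
    {r s : ℕ} (ℓ : Fin r → V →ₗ[ℝ] ℝ) (ℓ' : Fin s → V' →ₗ[ℝ] ℝ)
    (hℓ : LinearIndependent ℝ ℓ) (hℓ' : LinearIndependent ℝ ℓ')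
    (Q : Set V) (Q' : Set V')
    (hQ : Q = {x | ∀ i, 0 ≤ ℓ i x}) (hQ' : Q' = {y | ∀ j, 0 ≤ ℓ' j y})
    (f : V → V') (g : V' → V)
    (hf : WeaklySmooth Q f) (hg : WeaklySmooth Q' g)
    (hfQ : MapsTo f Q Q') (hgQ : MapsTo g Q' Q)
    (hgf : ∀ x ∈ Q, g (f x) = x) (hfg : ∀ y ∈ Q', f (g y) = y) :
    (∀ x ∈ Q, {i | ℓ i x = 0}.ncard = {j | ℓ' j (f x) = 0}.ncard) ∧ r = s := by
  have haux := quadrant_index_aux ℓ ℓ' hℓ hℓ' Q Q' hQ hQ' f g hf hg hfQ hgQ hgf hfg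
  refine ⟨haux, ?_⟩
  have haux' := quadrant_index_aux ℓ' ℓ hℓ' hℓ Q' Q hQ' hQ g f hg hf hgQ hfQ hfg hgf
  have h0Q : (0 : V) ∈ Q := by rw [hQ]; intro i; simp
  have h0Q' : (0 : V') ∈ Q' := by rw [hQ']; intro j; simp
  have e1 := haux 0 h0Q
  have e2 := haux' 0 h0Q'
  have hIuniv : {i : Fin r | ℓ i (0:V) = 0} = Set.univ := by ext i; simp
  have hJuniv : {j : Fin s | ℓ' j (0:V') = 0} = Set.univ := by ext j; simp
  rw [hIuniv, Set.ncard_univ, Nat.card_eq_fintype_card, Fintype.card_fin] at e1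
  rw [hJuniv, Set.ncard_univ, Nat.card_eq_fintype_card, Fintype.card_fin] at e2
  have hle1 : {j | ℓ' j (f 0) = 0}.ncard ≤ s := by
    calc {j | ℓ' j (f 0) = 0}.ncard ≤ (Set.univ : Set (Fin s)).ncard :=
          Set.ncard_le_ncard (Set.subset_univ _) Set.finite_univ
      _ = s := by rw [Set.ncard_univ, Nat.card_eq_fintype_card, Fintype.card_fin]
  have hle2 : {i | ℓ i (g 0) = 0}.ncard ≤ r := by
    calc {i | ℓ i (g 0) = 0}.ncard ≤ (Set.univ : Set (Fin r)).ncard :=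
          Set.ncard_le_ncard (Set.subset_univ _) Set.finite_univ
      _ = r := by rw [Set.ncard_univ, Nat.card_eq_fintype_card, Fintype.card_fin]
  omega
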